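/- Let m ≥ 2 and let f be a bent function from GF(2^{2m}) to GF(2). Then the design supported by the minimum weight codewords of C(f) has the symmetric difference property: for any three codewords u, v, w of C(f) of Hamming weight 2^{2m−1} − 2^{m−1}, the sum u + v + w (whose support is the symmetric difference of the supports of u, v, w) has Hamming weight either 2^{2m−1} − 2^{m−1} or 2^{2m−1} + 2^{m−1}; in the latter case its support is the complement of the support of a codeword of weight 2^{2m−1} − 2^{m−1}. -/

import Mathlib

noncomputable section

/-- The finite field `GF(2^n)` is finite. -/
instance (n : ℕ) : Fintype (GaloisField 2 n) := Fintype.ofFinite _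

/-- The absolute trace map from `GF(2^(2m))` to `GF(2)`. -/
def tr (m : ℕ) (x : GaloisField 2 (2*m)) : ZMod 2 :=
  Algebra.trace (ZMod 2) (GaloisField 2 (2*m)) x

/-- A Boolean function `f : GF(2^(2m)) → GF(2)` is bent if all its Walsh
transform values have absolute value `2^m`. -/
def IsBent (m : ℕ) (f : GaloisField 2 (2*m) → ZMod 2) : Prop :=
  ∀ w : GaloisField 2 (2*m),
    |∑ x : GaloisField 2 (2*m), (-1 : ℤ) ^ ((f x + tr m (w * x)).val)| = 2 ^ m

/-- A tuple `(f 0, …, f (ℓ-1))` of Boolean functions on `GF(2^(2m))` is a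
`(2m, ℓ)` bent vectorial function if every nonzero `GF(2)`-linear combination
of the `f j` is bent. -/
def IsBentVectorial (m ℓ : ℕ) (f : Fin ℓ → GaloisField 2 (2*m) → ZMod 2) : Prop :=
  ∀ a : Fin ℓ → ZMod 2, a ≠ 0 → IsBent m (fun x => ∑ j, a j * f j x)

/-- The binary linear code `C(f 0, …, f (ℓ-1))` of length `2^(2m)` (with
coordinates indexed by `GF(2^(2m))`, a codeword being a function
`GF(2^(2m)) → GF(2)`, i.e. the truth table of a Boolean function), spanned by
the truth tables of the `f j`, the truth tables of the linear functions
`x ↦ tr (w * x)` for all `w`, and the all-one vector. -/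
def code (m ℓ : ℕ) (f : Fin ℓ → GaloisField 2 (2*m) → ZMod 2) :
    Submodule (ZMod 2) (GaloisField 2 (2*m) → ZMod 2) :=
  Submodule.span (ZMod 2)
    (Set.range f ∪ Set.range (fun w => fun x => tr m (w * x)) ∪ {fun _ => (1 : ZMod 2)})

/-- The Hamming weight of a codeword: the number of nonzero coordinates. -/
def wt (m : ℕ) (c : GaloisField 2 (2*m) → ZMod 2) : ℕ :=
  {x | c x ≠ 0}.ncard

/-- The support of a codeword: the set of coordinates where it is nonzero. -/
def supp (m : ℕ) (c : GaloisField 2 (2*m) → ZMod 2) : Set (GaloisField 2 (2*m)) :=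
  {x | c x ≠ 0}

-- auxiliary lemmas (to be placed above stmt_4)

lemma tr_addl (m : ℕ) (y z : GaloisField 2 (2*m)) :
    tr m (y + z) = tr m y + tr m z := by
  rw [tr, map_add]; rfl

lemma tr_add (m : ℕ) (b1 b2 x : GaloisField 2 (2*m)) :
    tr m ((b1+b2)*x) = tr m (b1*x) + tr m (b2*x) := by
  rw [add_mul, tr_addl]

lemma gf_card (m : ℕ) (hm : 1 ≤ m) :
    Fintype.card (GaloisField 2 (2*m)) = 2^(2*m) := by
  rw [← Nat.card_eq_fintype_card]; exact GaloisField.card 2 (2*m) (by omega)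

lemma wt_card (m : ℕ) (g : GaloisField 2 (2*m) → ZMod 2) :
    wt m g = (Finset.univ.filter (fun x => g x ≠ 0)).card := by
  rw [wt, Set.ncard_eq_toFinset_card', Set.toFinset_setOf]

lemma wt_sum (m : ℕ) (g : GaloisField 2 (2*m) → ZMod 2) :
    ∑ x : GaloisField 2 (2*m), ((-1:ℤ)) ^ ((g x).val)
      = (Fintype.card (GaloisField 2 (2*m)) : ℤ) - 2 * (wt m g : ℤ) := by
  have h1 : ∀ a : ZMod 2, ((-1:ℤ)) ^ a.val = 1 - 2 * (if a ≠ 0 then (1:ℤ) else 0) := by decide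
  calc ∑ x, ((-1:ℤ))^((g x).val)
      = ∑ x : GaloisField 2 (2*m), (1 - 2 * (if g x ≠ 0 then (1:ℤ) else 0)) :=
        Finset.sum_congr rfl fun x _ => h1 (g x)
    _ = _ := by
        rw [Finset.sum_sub_distrib, Finset.sum_const, ← Finset.mul_sum, Finset.sum_boole,
          wt_card]
        simp

lemma code_form (m : ℕ) (f : GaloisField 2 (2*m) → ZMod 2) (g : GaloisField 2 (2*m) → ZMod 2)
    (hg : g ∈ code m 1 (fun _ => f)) :
    ∃ a b c, g = fun x => a * f x + tr m (b*x) + c := by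
  refine Submodule.span_induction ?_ ?_ ?_ ?_ hg
  · rintro g ((⟨i, rfl⟩ | ⟨b, rfl⟩) | rfl)
    · exact ⟨1, 0, 0, by funext x; simp [tr]⟩
    · exact ⟨0, b, 0, by funext x; simp⟩
    · exact ⟨0, 0, 1, by funext x; simp [tr]⟩
  · exact ⟨0, 0, 0, by funext x; simp [tr]⟩
  · rintro g h _ _ ⟨a1,b1,c1,rfl⟩ ⟨a2,b2,c2,rfl⟩
    refine ⟨a1+a2, b1+b2, c1+c2, ?_⟩
    funext x
    simp only [Pi.add_apply, tr_add]
    ring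
  · rintro r g _ ⟨a,b,c,rfl⟩
    rcases (by decide : ∀ r : ZMod 2, r = 0 ∨ r = 1) r with h|h <;> subst h
    · exact ⟨0, 0, 0, by funext x; simp [tr]⟩
    · exact ⟨a, b, c, by funext x; simp⟩

lemma fiber_card (m : ℕ) (hm : 1 ≤ m) (b : GaloisField 2 (2*m)) (x0 : GaloisField 2 (2*m))
    (hx0 : tr m (b*x0) = 1) (d : ZMod 2) :
    (Finset.univ.filter (fun x => tr m (b*x) = d)).card = 2^(2*m-1) := by
  have hcancel : ∀ y : GaloisField 2 (2*m), x0 + (x0 + y) = y := by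
    intro y; rw [← add_assoc, CharTwo.add_self_eq_zero, zero_add]
  have key : ∀ e : ZMod 2, (Finset.univ.filter (fun x => tr m (b*x) = e)).card
      = (Finset.univ.filter (fun x => tr m (b*x) = e + 1)).card := by
    intro e
    refine Finset.card_bij' (fun x _ => x0 + x) (fun x _ => x0 + x) ?_ ?_
      (fun x _ => hcancel x) (fun x _ => hcancel x)
    · intro x hx
      simp only [Finset.mem_filter, Finset.mem_univ, true_and] at hx ⊢
      rw [mul_add, tr_addl, hx0, hx]; ring
    · intro x hx
      simp only [Finset.mem_filter, Finset.mem_univ, true_and] at hx ⊢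
      rw [mul_add, tr_addl, hx0]
      revert e; generalize tr m (b*x) = a; revert a; decide
  have hne : (Finset.univ.filter (fun x => ¬ tr m (b*x) = d)).card
      = (Finset.univ.filter (fun x => tr m (b*x) = d + 1)).card := by
    congr 1
    apply Finset.filter_congr
    intro x _
    constructor
    · revert d; generalize tr m (b*x) = a; revert a; decide
    · revert d; generalize tr m (b*x) = a; revert a; decide
  have hpart : (Finset.univ.filter (fun x => tr m (b*x) = d)).card
      + (Finset.univ.filter (fun x => ¬ tr m (b*x) = d)).card = 2^(2*m) := by
    rw [Finset.card_filter_add_card_filter_not, Finset.card_univ, gf_card m hm]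
  have h2 : (2:ℕ)^(2*m) = 2 * 2^(2*m-1) := by
    rw [← pow_succ']; congr 1; omega
  rw [hne, ← key] at hpart
  omega

lemma affine_wt (m : ℕ) (hm : 1 ≤ m) (b : GaloisField 2 (2*m)) (c : ZMod 2) :
    wt m (fun x => tr m (b*x) + c) = 0 ∨ wt m (fun x => tr m (b*x) + c) = 2^(2*m) ∨
    wt m (fun x => tr m (b*x) + c) = 2^(2*m-1) := by
  by_cases h : ∀ x, tr m (b*x) = 0
  · rcases (by decide : ∀ c : ZMod 2, c = 0 ∨ c = 1) c with hc|hc <;> subst hc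
    · left
      have hs : {x : GaloisField 2 (2*m) | tr m (b*x) + 0 ≠ 0} = ∅ := by
        ext x; simp [h x]
      rw [wt, hs, Set.ncard_empty]
    · right; left
      rw [wt]
      have : {x : GaloisField 2 (2*m) | tr m (b*x) + 1 ≠ 0} = Set.univ := by
        ext x; simp [h x]
      rw [this, Set.ncard_univ, GaloisField.card 2 (2*m) (by omega)]
  · right; right
    push_neg at h
    obtain ⟨x0, hx0⟩ := h
    have hx0' : tr m (b*x0) = 1 := by
      revert hx0; generalize tr m (b*x0) = a; revert a; decide
    rw [wt_card]
    have : (Finset.univ.filter (fun x => tr m (b*x) + c ≠ 0))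
        = (Finset.univ.filter (fun x => tr m (b*x) = c + 1)) := by
      apply Finset.filter_congr
      intro x _
      constructor
      · revert c; generalize tr m (b*x) = a; revert a; decide
      · revert c; generalize tr m (b*x) = a; revert a; decide
    rw [this, fiber_card m hm b x0 hx0']

lemma bent_wt (m : ℕ) (hm : 1 ≤ m) (f : GaloisField 2 (2*m) → ZMod 2) (hf : IsBent m f)
    (b : GaloisField 2 (2*m)) (c : ZMod 2) :
    wt m (fun x => f x + tr m (b*x) + c) = 2^(2*m-1) - 2^(m-1) ∨
    wt m (fun x => f x + tr m (b*x) + c) = 2^(2*m-1) + 2^(m-1) := by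
  set g := fun x => f x + tr m (b*x) + c with hg
  have habs : |∑ x : GaloisField 2 (2*m), ((-1:ℤ)) ^ ((g x).val)| = 2^m := by
    have key : ∀ a c : ZMod 2, ((-1:ℤ))^((a+c).val) = (-1:ℤ)^(c.val) * (-1:ℤ)^(a.val) := by
      decide
    have : ∑ x : GaloisField 2 (2*m), ((-1:ℤ)) ^ ((g x).val)
        = (-1:ℤ)^(c.val) * ∑ x : GaloisField 2 (2*m), ((-1:ℤ)) ^ ((f x + tr m (b*x)).val) := by
      rw [Finset.mul_sum]
      exact Finset.sum_congr rfl fun x _ => key (f x + tr m (b*x)) c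
    rw [this, abs_mul, abs_pow, abs_neg, abs_one, one_pow, one_mul]
    exact hf b
  have hS := wt_sum m g
  rw [gf_card m hm] at hS
  rcases abs_eq (by positivity : (0:ℤ) ≤ 2^m) |>.mp habs with h | h <;> rw [h] at hS
  all_goals {
    have e1 : (2:ℕ)^(2*m) = 2 * 2^(2*m-1) := by rw [← pow_succ']; congr 1; omega
    have e2 : (2:ℕ)^m = 2 * 2^(m-1) := by rw [← pow_succ']; congr 1; omega
    have e3 : (2:ℕ)^(m-1) ≤ 2^(2*m-1) := Nat.pow_le_pow_right (by norm_num) (by omega)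
    have c2 : ((2:ℤ))^m = ((2^m : ℕ) : ℤ) := by push_cast; ring
    rw [c2, e1, e2] at hS
    omega
  }


/-- the design supported by the minimum weight codewords of the
code `C(f)` of a bent function `f` has the symmetric difference property. -/
theorem stmt_4 (m : ℕ) (hm : 2 ≤ m)
    (f : GaloisField 2 (2*m) → ZMod 2) (hf : IsBent m f)
    (u v w : GaloisField 2 (2*m) → ZMod 2)
    (hu : u ∈ code m 1 (fun _ => f)) (hv : v ∈ code m 1 (fun _ => f))
    (hw : w ∈ code m 1 (fun _ => f))
    (hwu : wt m u = 2^(2*m-1) - 2^(m-1)) (hwv : wt m v = 2^(2*m-1) - 2^(m-1))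
    (hww : wt m w = 2^(2*m-1) - 2^(m-1)) :
    wt m (u + v + w) = 2^(2*m-1) - 2^(m-1) ∨
    (wt m (u + v + w) = 2^(2*m-1) + 2^(m-1) ∧
      ∃ c ∈ code m 1 (fun _ => f), wt m c = 2^(2*m-1) - 2^(m-1) ∧
        supp m (u + v + w) = (supp m c)ᶜ) := by
  have e1 : (2:ℕ)^(2*m) = 2 * 2^(2*m-1) := by rw [← pow_succ']; congr 1; omega
  have e2 : (2:ℕ)^m = 2 * 2^(m-1) := by rw [← pow_succ']; congr 1; omega
  have e3 : (2:ℕ)^(m-1) < 2^(2*m-1) := Nat.pow_lt_pow_right (by norm_num) (by omega)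
  have e4 : (0:ℕ) < 2^(m-1) := Nat.pow_pos (by norm_num)
  have zid1 : ∀ (A T1 T2 T3 d1 d2 d3 : ZMod 2),
      A + T1 + d1 + (A + T2 + d2) + (A + T3 + d3) = A + (T1 + T2 + T3) + (d1 + d2 + d3) := by
    decide
  have zc : ∀ A C : ZMod 2, (A + (C+1) ≠ 0 ↔ ¬(A + C ≠ 0)) := by decide
  have zs : ∀ A C : ZMod 2, (A + C ≠ 0 ↔ A + (C+1) = 0) := by decide
  -- every minimum weight codeword involves f with coefficient 1
  have key : ∀ g : GaloisField 2 (2*m) → ZMod 2, g ∈ code m 1 (fun _ => f) →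
      wt m g = 2^(2*m-1) - 2^(m-1) →
      ∃ b c, g = fun x => f x + tr m (b*x) + c := by
    intro g hg hwg
    obtain ⟨a, b, c, rfl⟩ := code_form m f g hg
    rcases (by decide : ∀ a : ZMod 2, a = 0 ∨ a = 1) a with ha|ha <;> subst ha
    · exfalso
      simp only [zero_mul, zero_add] at hwg
      rcases affine_wt m (by omega) b c with h|h|h <;> rw [h] at hwg <;> omega
    · refine ⟨b, c, ?_⟩
      funext x; rw [one_mul]
  obtain ⟨b1, c1, rfl⟩ := key u hu hwu
  obtain ⟨b2, c2, rfl⟩ := key v hv hwv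
  obtain ⟨b3, c3, rfl⟩ := key w hw hww
  have huvw : (fun x => f x + tr m (b1*x) + c1) + (fun x => f x + tr m (b2*x) + c2)
      + (fun x => f x + tr m (b3*x) + c3)
      = fun x => f x + tr m ((b1+b2+b3)*x) + (c1+c2+c3) := by
    funext x
    have et : tr m ((b1+b2+b3)*x) = tr m (b1*x) + tr m (b2*x) + tr m (b3*x) := by
      rw [tr_add, tr_add]
    simp only [Pi.add_apply, et]
    exact zid1 (f x) _ _ _ _ _ _
  rw [huvw]
  rcases bent_wt m (by omega) f hf (b1+b2+b3) (c1+c2+c3) with h|h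
  · left; exact h
  · right
    refine ⟨h, (fun x => f x + tr m ((b1+b2+b3)*x) + (c1+c2+c3+1)), ?_, ?_, ?_⟩
    · have h1 : (fun (_ : GaloisField 2 (2*m)) => (1 : ZMod 2)) ∈ code m 1 (fun _ => f) :=
        Submodule.subset_span (Or.inr rfl)
      have hc' : (fun x => f x + tr m ((b1+b2+b3)*x) + (c1+c2+c3+1))
          = ((fun x => f x + tr m (b1*x) + c1) + (fun x => f x + tr m (b2*x) + c2)
            + (fun x => f x + tr m (b3*x) + c3)) + (fun _ => (1 : ZMod 2)) := by
        rw [huvw]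
        funext x
        simp only [Pi.add_apply]
        ring
      rw [hc']
      exact Submodule.add_mem _ (Submodule.add_mem _ (Submodule.add_mem _ hu hv) hw) h1
    · rcases bent_wt m (by omega) f hf (b1+b2+b3) (c1+c2+c3+1) with h'|h'
      · exact h'
      · exfalso
        have hcompl : {x | (fun x => f x + tr m ((b1+b2+b3)*x) + (c1+c2+c3+1)) x ≠ 0}
            = {x | (fun x => f x + tr m ((b1+b2+b3)*x) + (c1+c2+c3)) x ≠ 0}ᶜ := by
          ext x
          simp only [Set.mem_setOf_eq, Set.mem_compl_iff]
          exact zc _ _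
        have hsum : wt m (fun x => f x + tr m ((b1+b2+b3)*x) + (c1+c2+c3))
            + wt m (fun x => f x + tr m ((b1+b2+b3)*x) + (c1+c2+c3+1)) = 2^(2*m) := by
          rw [wt, wt, hcompl, Set.ncard_add_ncard_compl]
          exact GaloisField.card 2 (2*m) (by omega)
        rw [h, h'] at hsum
        omega
    · rw [supp, supp]
      ext x
      simp only [Set.mem_setOf_eq, Set.mem_compl_iff, not_not]
      exact zs _ _
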